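/- Let α : ℝ → ℝ be a measurable function with 0 < inf_{x∈ℝ} α(x) ≤ sup_{x∈ℝ} α(x) < 2, and suppose the closure D̄ of the set D of discontinuity points of α is countable. Then there exist a sequence (U_m)_{m≥1} of open subsets of ℝ and a sequence (αⁿ)_{n≥1} of bounded continuously differentiable functions ℝ → ℝ with bounded derivative such that: (S1) closure(U_{m+1}) ⊆ U_m for all m and λ(U_m) → 0; (S2) 0 < inf_{n≥1} inf_{x∈ℝ} αⁿ(x) ≤ sup_{n≥1} sup_{x∈ℝ} αⁿ(x) < 2; (S3) for every m ≥ 1, sup_{x ∈ [−m,m] ∩ (U_m)ᶜ} |αⁿ(x) − α(x)| → 0 as n → ∞. -/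

import Mathlib

open Filter MeasureTheory ENNReal intervalIntegral

lemma softclamp (a b ε : ℝ) (hab : a < b) (hε : 0 < ε) :
    ∃ f : ℝ → ℝ, ContDiff ℝ 1 f ∧ (∀ x, |deriv f x| ≤ 1) ∧
      (∀ t ∈ Set.Icc a b, f t = t) ∧ (∀ t, f t ∈ Set.Icc (a - ε) (b + ε)) ∧
      (∀ s t, |f s - f t| ≤ |s - t|) := by
  set c : ℝ := (a + b) / 2 with hc
  have hrIn : (0:ℝ) < (b - a) / 2 := by linarith
  let φ : ContDiffBump c := ⟨(b - a) / 2, (b - a) / 2 + ε, hrIn, by linarith⟩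
  have hφc : Continuous φ := φ.continuous
  have hIn : φ.rIn = (b - a) / 2 := rfl
  have hOut : φ.rOut = (b - a) / 2 + ε := rfl
  set f : ℝ → ℝ := fun t => a + ∫ s in a..t, φ s with hf
  have hd : ∀ t, HasDerivAt f (φ t) t := fun t =>
    ((hφc.integral_hasStrictDerivAt a t).hasDerivAt).const_add a
  have hdiff : Differentiable ℝ f := fun t => (hd t).differentiableAt
  have hderiv : deriv f = φ := funext fun t => (hd t).deriv
  have hφ01 : ∀ x : ℝ, |φ x| ≤ 1 := fun x => abs_le.mpr ⟨by linarith [φ.nonneg (x := x)], φ.le_one⟩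
  have hint : ∀ s t : ℝ, IntervalIntegrable (fun x => φ x) volume s t := fun s t =>
    hφc.intervalIntegrable s t
  -- φ = 1 on [a,b]
  have hone : ∀ s ∈ Set.Icc a b, φ s = 1 := by
    intro s hs
    apply φ.one_of_mem_closedBall
    rw [Metric.mem_closedBall, Real.dist_eq]
    rw [abs_le]
    cases' hs with h1 h2
    simp only [hIn, hc]
    constructor <;> linarith
  -- φ = 0 outside [a-ε, b+ε]
  have hzero : ∀ s : ℝ, s ≤ a - ε ∨ b + ε ≤ s → φ s = 0 := by
    intro s hs
    apply φ.zero_of_le_dist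
    rw [Real.dist_eq]
    show (b - a) / 2 + ε ≤ |s - c|
    rcases hs with h | h
    · rw [abs_sub_comm, abs_of_nonneg (by simp only [hc]; linarith)]; simp only [hc]; linarith
    · rw [abs_of_nonneg (by simp only [hc]; linarith)]; simp only [hc]; linarith
  -- bound on integrals over subintervals
  have hbound : ∀ s t : ℝ, s ≤ t → (∫ x in s..t, φ x) ≤ t - s := by
    intro s t hst
    calc (∫ x in s..t, φ x) ≤ ∫ x in s..t, (1:ℝ) :=
          integral_mono_on hst (hint s t) (intervalIntegrable_const) (fun x _ => φ.le_one)
      _ = t - s := by simp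
  have hnn : ∀ s t : ℝ, s ≤ t → 0 ≤ ∫ x in s..t, φ x := fun s t hst =>
    integral_nonneg hst (fun u _ => φ.nonneg)
  refine ⟨f, ?_, ?_, ?_, ?_, ?_⟩
  · exact contDiff_one_iff_deriv.mpr ⟨hdiff, hderiv ▸ hφc⟩
  · intro x; rw [hderiv]; exact hφ01 x
  · intro t ht
    have : (∫ s in a..t, φ s) = ∫ s in a..t, (1:ℝ) := by
      apply integral_congr
      intro s hs
      apply hone
      rw [Set.uIcc_of_le ht.1] at hs
      exact ⟨hs.1, le_trans hs.2 ht.2⟩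
    rw [hf]; simp only [this]; simp
  · intro t
    constructor
    · -- lower bound
      rcases le_or_gt a t with h | h
      · have := hnn a t h; simp only [hf]; linarith
      · rcases le_or_gt (a - ε) t with h2 | h2
        · have h3 : (∫ x in t..a, φ x) ≤ a - t := hbound t a h.le
          simp only [hf]
          rw [integral_symm]
          linarith
        · have hsplit : (∫ x in t..(a-ε), φ x) + (∫ x in (a-ε)..a, φ x) = ∫ x in t..a, φ x :=
            integral_add_adjacent_intervals (hint _ _) (hint _ _)
          have hz : (∫ x in t..(a-ε), φ x) = 0 := by
            rw [show (0:ℝ) = ∫ x in t..(a-ε), (0:ℝ) by simp]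
            apply integral_congr
            intro s hs
            rw [Set.uIcc_of_le h2.le] at hs
            exact hzero s (Or.inl hs.2)
          have h4 : (∫ x in (a-ε)..a, φ x) ≤ a - (a - ε) := hbound _ _ (by linarith)
          simp only [hf]
          rw [integral_symm]
          linarith
    · -- upper bound
      rcases le_or_gt t a with h | h
      · have := hnn t a h
        simp only [hf]; rw [integral_symm]; linarith
      · rcases le_or_gt t (b + ε) with h2 | h2
        · have h3 : (∫ x in a..t, φ x) ≤ t - a := hbound a t h.le
          simp only [hf]; linarith
        · have hsplit : (∫ x in a..(b+ε), φ x) + (∫ x in (b+ε)..t, φ x) = ∫ x in a..t, φ x :=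
            integral_add_adjacent_intervals (hint _ _) (hint _ _)
          have hz : (∫ x in (b+ε)..t, φ x) = 0 := by
            rw [show (0:ℝ) = ∫ x in (b+ε)..t, (0:ℝ) by simp]
            apply integral_congr
            intro s hs
            rw [Set.uIcc_of_le h2.le] at hs
            exact hzero s (Or.inr hs.1)
          have h4 : (∫ x in a..(b+ε), φ x) ≤ (b + ε) - a := hbound _ _ (by linarith)
          simp only [hf]
          linarith
  · -- Lipschitz
    have hlip : LipschitzWith 1 f := by
      apply lipschitzWith_of_nnnorm_deriv_le hdiff
      intro x
      rw [← NNReal.coe_le_coe, coe_nnnorm, NNReal.coe_one, Real.norm_eq_abs, hderiv]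
      exact hφ01 x
    intro s t
    have := hlip.dist_le_mul s t
    rwa [Real.dist_eq, Real.dist_eq, NNReal.coe_one, one_mul] at this

lemma nested_opens (S : Set ℝ) (hS : IsClosed S) (h0 : volume S = 0) :
    ∃ U : ℕ → Set ℝ, (∀ m, IsOpen (U m)) ∧ (∀ m, S ⊆ U m) ∧
      (∀ m, volume (U m) ≤ (1/2 : ℝ≥0∞)^m) ∧ (∀ m, closure (U (m+1)) ⊆ U m) := by
  have key : ∀ (V : Set ℝ) (ε : ℝ≥0∞), IsOpen V → S ⊆ V → 0 < ε →
      ∃ W : Set ℝ, IsOpen W ∧ S ⊆ W ∧ volume W ≤ ε ∧ closure W ⊆ V := by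
    intro V ε hV hSV hε
    obtain ⟨V', hV'sub, hV'open, hV'vol⟩ :=
      Set.exists_isOpen_lt_of_lt S ε (by rw [h0]; exact hε)
    set T := V ∩ V' with hT
    have hTopen : IsOpen T := hV.inter hV'open
    have hST : S ⊆ T := Set.subset_inter hSV hV'sub
    have hdisj : Disjoint S Tᶜ := Set.disjoint_compl_right_iff_subset.mpr hST
    obtain ⟨u, v, hu, hv, hSu, hTv, huv⟩ :=
      normal_separation hS (isClosed_compl_iff.mpr hTopen) hdisj
    refine ⟨u ∩ T, hu.inter hTopen, Set.subset_inter hSu hST, ?_, ?_⟩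
    · exact le_trans (measure_mono (Set.inter_subset_right.trans Set.inter_subset_right)) hV'vol.le
    · have h1 : closure (u ∩ T) ⊆ closure u := closure_mono Set.inter_subset_left
      have h2 : closure u ⊆ vᶜ :=
        closure_minimal (fun x hx => Set.disjoint_left.mp huv hx) (isClosed_compl_iff.mpr hv)
      have h3 : vᶜ ⊆ T := by
        intro x hx
        by_contra hxT
        exact hx (hTv hxT)
      exact fun x hx => (h3 (h2 (h1 hx))).1
  obtain ⟨U0, hU0o, hU0s, hU0v, _⟩ := key Set.univ 1 isOpen_univ (Set.subset_univ S) one_pos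
  choose! W hW1 hW2 hW3 hW4 using key
  set U : ℕ → Set ℝ := fun m => Nat.rec U0
    (fun m prev => W prev ((1/2 : ℝ≥0∞)^(m+1))) m with hU
  have hpos : ∀ m : ℕ, (0 : ℝ≥0∞) < (1/2 : ℝ≥0∞)^(m+1) := fun m =>
    ENNReal.pow_pos (by norm_num) _
  have main : ∀ m, IsOpen (U m) ∧ S ⊆ U m ∧ volume (U m) ≤ (1/2 : ℝ≥0∞)^m := by
    intro m
    induction m with
    | zero => exact ⟨hU0o, hU0s, by simp only [pow_zero]; exact hU0v⟩
    | succ m ih =>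
      have h : IsOpen (U m) ∧ S ⊆ U m ∧ volume (U m) ≤ _ := ih
      refine ⟨?_, ?_, ?_⟩
      · exact hW1 (U m) _ h.1 h.2.1 (hpos m)
      · exact hW2 (U m) _ h.1 h.2.1 (hpos m)
      · exact hW3 (U m) _ h.1 h.2.1 (hpos m)
  refine ⟨U, fun m => (main m).1, fun m => (main m).2.1, fun m => (main m).2.2, fun m => ?_⟩
  exact hW4 (U m) _ (main m).1 (main m).2.1 (hpos m)



open Filter MeasureTheory

/-- Let `α : ℝ → ℝ` be measurable with `0 < inf α ≤ sup α < 2` and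
suppose the closure of its set of discontinuity points is countable. Then there exist
open sets `(U_m)` and bounded `C¹` functions `(αⁿ)` with bounded derivative such that
(S1) `closure (U_{m+1}) ⊆ U_m` and `λ(U_m) → 0`;
(S2) `0 < inf_n inf_x αⁿ(x) ≤ sup_n sup_x αⁿ(x) < 2`;
(S3) for every `m`, `αⁿ → α` uniformly on `[−m,m] ∩ (U_m)ᶜ` as `n → ∞`. -/
theorem stable_index_smooth_approximation (α : ℝ → ℝ) (hmeas : Measurable α)
    (hlb : ∃ c > (0 : ℝ), ∀ x, c ≤ α x) (hub : ∃ c < (2 : ℝ), ∀ x, α x ≤ c)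
    (hD : (closure {x : ℝ | ¬ ContinuousAt α x}).Countable) :
    ∃ (U : ℕ → Set ℝ) (A : ℕ → ℝ → ℝ),
      (∀ m, IsOpen (U m)) ∧
      (∀ m, closure (U (m + 1)) ⊆ U m) ∧
      Tendsto (fun m => volume (U m)) atTop (nhds 0) ∧
      (∀ n, ContDiff ℝ 1 (A n)) ∧
      (∀ n, ∃ M : ℝ, (∀ x, |A n x| ≤ M) ∧ ∀ x, |deriv (A n) x| ≤ M) ∧
      (∃ c > (0 : ℝ), ∀ n x, c ≤ A n x) ∧
      (∃ c < (2 : ℝ), ∀ n x, A n x ≤ c) ∧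
      (∀ m : ℕ, TendstoUniformlyOn (fun n => A n) α atTop
        (Set.Icc (-(m : ℝ)) (m : ℝ) ∩ (U m)ᶜ)) := by
  classical
  obtain ⟨c, hc0, hcα⟩ := hlb
  obtain ⟨d, hd2, hαd⟩ := hub
  set a : ℝ := min c 1 / 2 with ha
  set b : ℝ := (max d 1 + 2) / 2 with hb
  have hmin0 : 0 < min c 1 := lt_min hc0 one_pos
  have hmax2 : max d 1 < 2 := max_lt hd2 one_lt_two
  have ha0 : 0 < a := by positivity
  have hb2 : b < 2 := by rw [hb]; linarith
  have hab : a < b := by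
    have h1 : a ≤ 1 / 2 := by rw [ha]; have := min_le_right c 1; linarith
    have h2 : (3:ℝ)/2 ≤ b := by rw [hb]; have := le_max_right d 1; linarith
    linarith
  have haα : ∀ x, a ≤ α x := fun x => by
    have h1 : min c 1 ≤ c := min_le_left c 1
    have := hcα x; rw [ha]; linarith
  have hαb : ∀ x, α x ≤ b := fun x => by
    have h1 : d ≤ max d 1 := le_max_left d 1
    have := hαd x; rw [hb]; linarith
  set ε₀ : ℝ := min a (2 - b) / 2 with hε₀def
  have hε₀ : 0 < ε₀ := by
    have : 0 < min a (2 - b) := lt_min ha0 (by linarith)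
    positivity
  have hε₀a : ε₀ ≤ a / 2 := by
    rw [hε₀def]; have := min_le_left a (2 - b); linarith
  have hε₀b : ε₀ ≤ (2 - b) / 2 := by
    rw [hε₀def]; have := min_le_right a (2 - b); linarith
  obtain ⟨cl, hclC, hclD, hclId, hclR, hclLip⟩ := softclamp a b ε₀ hab hε₀
  -- the nested open sets
  set S : Set ℝ := closure {x : ℝ | ¬ ContinuousAt α x} with hSdef
  have hSclosed : IsClosed S := isClosed_closure
  have hS0 : volume S = 0 := Set.Countable.measure_zero hD volume
  obtain ⟨U, hUo, hUS, hUv, hUc⟩ := nested_opens S hSclosed hS0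
  have hmono : Antitone U := antitone_nat_of_succ_le fun n => subset_closure.trans (hUc n)
  set C : ℕ → Set ℝ := fun n => Set.Icc (-(n:ℝ)) (n:ℝ) ∩ (U n)ᶜ with hCdef
  have hCclosed : ∀ n, IsClosed (C n) :=
    fun n => isClosed_Icc.inter (isClosed_compl_iff.mpr (hUo n))
  have hCmono : ∀ m n : ℕ, m ≤ n → C m ⊆ C n := by
    intro m n h
    apply Set.inter_subset_inter
    · exact Set.Icc_subset_Icc (neg_le_neg (Nat.cast_le.mpr h)) (Nat.cast_le.mpr h)
    · exact Set.compl_subset_compl.mpr (hmono h)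
  have hαC : ∀ n, ContinuousOn α (C n) := by
    intro n x hx
    have hxS : x ∉ S := fun hxS => hx.2 (hUS n hxS)
    have : ContinuousAt α x := by
      by_contra h
      exact hxS (subset_closure h)
    exact this.continuousWithinAt
  -- Tietze extensions
  have hgex : ∀ n, ∃ g : ℝ → ℝ, Continuous g ∧ ∀ x ∈ C n, g x = α x := by
    intro n
    obtain ⟨g, hg⟩ := ContinuousMap.exists_restrict_eq (hCclosed n)
      ⟨_, continuousOn_iff_continuous_restrict.mp (hαC n)⟩
    exact ⟨g, g.continuous, fun x hx => ContinuousMap.congr_fun hg ⟨x, hx⟩⟩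
  choose g hgc hge using hgex
  -- the flattening maps
  have hθex : ∀ n : ℕ, ∃ θ : ℝ → ℝ, ContDiff ℝ 1 θ ∧ (∀ x, |deriv θ x| ≤ 1) ∧
      (∀ t ∈ Set.Icc (-(n:ℝ) - 2) ((n:ℝ) + 2), θ t = t) ∧
      (∀ t, θ t ∈ Set.Icc (-(n:ℝ) - 2 - 1) ((n:ℝ) + 2 + 1)) ∧
      (∀ s t, |θ s - θ t| ≤ |s - t|) := by
    intro n
    have hn : (0:ℝ) ≤ n := Nat.cast_nonneg n
    exact softclamp (-(n:ℝ) - 2) ((n:ℝ) + 2) 1 (by linarith) one_pos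
  choose θ hθC hθD hθId hθR hθLip using hθex
  -- the polynomials
  have hpex : ∀ n : ℕ, ∃ q : Polynomial ℝ,
      ∀ x ∈ Set.Icc (-(n:ℝ) - 2 - 1) ((n:ℝ) + 2 + 1), |q.eval x - g n x| < 1/((n:ℝ)+1) := by
    intro n
    exact exists_polynomial_near_of_continuousOn _ _ (g n) ((hgc n).continuousOn) _ (by positivity)
  choose p hpa using hpex
  set A : ℕ → ℝ → ℝ := fun n x => cl ((p n).eval (θ n x)) with hA
  have hpolyC : ∀ n, ContDiff ℝ 1 fun y : ℝ => (p n).eval y := by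
    intro n
    refine contDiff_one_iff_deriv.mpr ⟨(p n).differentiable, ?_⟩
    have : (deriv fun y : ℝ => (p n).eval y) = fun y : ℝ => ((p n).derivative).eval y :=
      funext fun y => Polynomial.deriv _
    rw [this]
    exact (p n).derivative.continuous
  refine ⟨U, A, hUo, hUc, ?_, ?_, ?_, ?_, ?_, ?_⟩
  · -- volume tendsto 0
    refine tendsto_of_tendsto_of_tendsto_of_le_of_le tendsto_const_nhds
      (ENNReal.tendsto_pow_atTop_nhds_zero_of_lt_one (by norm_num)) (fun m => zero_le) hUv
  · -- ContDiff
    intro n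
    exact hclC.comp ((hpolyC n).comp (hθC n))
  · -- bounds on A and deriv A
    intro n
    have hn0 : (0:ℝ) ≤ (n:ℝ) := Nat.cast_nonneg n
    obtain ⟨M2, hM2⟩ := (isCompact_Icc (a := -(n:ℝ) - 2 - 1) (b := (n:ℝ) + 2 + 1)).exists_bound_of_continuousOn
      ((p n).derivative.continuous.continuousOn)
    have hM2nn : 0 ≤ M2 := le_trans (norm_nonneg _) (hM2 (0:ℝ) ⟨by linarith, by linarith⟩)
    refine ⟨max 2 M2, fun x => ?_, fun x => ?_⟩
    · have h := hclR ((p n).eval (θ n x))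
      have h1 : 0 < a - ε₀ := by linarith
      have h2 : b + ε₀ < 2 := by linarith
      refine le_trans (abs_le.mpr ⟨?_, ?_⟩) (le_max_left _ _)
      · have := h.1; linarith
      · have := h.2; linarith
    · -- derivative bound
      have hq : HasDerivAt (fun y : ℝ => (p n).eval y) ((p n).derivative.eval (θ n x)) (θ n x) :=
        (p n).hasDerivAt (θ n x)
      have hθx : HasDerivAt (θ n) (deriv (θ n) x) x :=
        (((hθC n).differentiable one_ne_zero) x).hasDerivAt
      have hcl' : HasDerivAt cl (deriv cl ((p n).eval (θ n x))) ((p n).eval (θ n x)) :=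
        ((hclC.differentiable one_ne_zero) _).hasDerivAt
      have hcomp : HasDerivAt (A n)
          (deriv cl ((p n).eval (θ n x)) * ((p n).derivative.eval (θ n x) * deriv (θ n) x)) x := by
        have := (hcl'.comp x (hq.comp x hθx))
        exact this
      rw [hcomp.deriv]
      have h1 : |deriv cl ((p n).eval (θ n x))| ≤ 1 := hclD _
      have h2 : |(p n).derivative.eval (θ n x)| ≤ M2 := by
        have := hM2 (θ n x) (hθR n x)
        rwa [Real.norm_eq_abs] at this
      have h3 : |deriv (θ n) x| ≤ 1 := hθD n x
      calc |deriv cl ((p n).eval (θ n x)) * ((p n).derivative.eval (θ n x) * deriv (θ n) x)|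
          = |deriv cl ((p n).eval (θ n x))| * (|(p n).derivative.eval (θ n x)| * |deriv (θ n) x|) := by
            rw [abs_mul, abs_mul]
        _ ≤ 1 * (M2 * 1) := by
            apply mul_le_mul h1 _ (by positivity) one_pos.le
            exact mul_le_mul h2 h3 (abs_nonneg _) hM2nn
        _ ≤ max 2 M2 := by simpa using le_max_right 2 M2
  · -- lower bound
    exact ⟨a - ε₀, by linarith, fun n x => (hclR _).1⟩
  · -- upper bound
    exact ⟨b + ε₀, by linarith, fun n x => (hclR _).2⟩
  · -- uniform convergence
    intro m
    rw [Metric.tendstoUniformlyOn_iff]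
    intro ε hεpos
    obtain ⟨N, hN⟩ := exists_nat_one_div_lt hεpos
    filter_upwards [eventually_ge_atTop (max m N)] with n hn x hx
    have hnm : m ≤ n := le_trans (le_max_left _ _) hn
    have hnN : N ≤ n := le_trans (le_max_right _ _) hn
    have hxC : x ∈ C n := hCmono m n hnm hx
    have hmn' : (m:ℝ) ≤ (n:ℝ) := Nat.cast_le.mpr hnm
    have hxI : x ∈ Set.Icc (-(n:ℝ) - 2) ((n:ℝ) + 2) := by
      obtain ⟨⟨h1, h2⟩, -⟩ := hx
      constructor <;> linarith
    have hxI3 : x ∈ Set.Icc (-(n:ℝ) - 2 - 1) ((n:ℝ) + 2 + 1) := by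
      obtain ⟨h1, h2⟩ := hxI
      constructor <;> linarith
    have hθx : θ n x = x := hθId n x hxI
    have hαcl : cl (α x) = α x := hclId (α x) ⟨haα x, hαb x⟩
    have hgx : g n x = α x := hge n x hxC
    have key : dist (α x) (A n x) ≤ |(p n).eval x - α x| := by
      rw [Real.dist_eq, hA]
      simp only [hθx]
      calc |α x - cl ((p n).eval x)| = |cl (α x) - cl ((p n).eval x)| := by rw [hαcl]
        _ ≤ |α x - (p n).eval x| := hclLip _ _
        _ = |(p n).eval x - α x| := abs_sub_comm _ _
    have hclose : |(p n).eval x - α x| < 1/((n:ℝ)+1) := by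
      rw [← hgx]
      exact hpa n x hxI3
    have hfin : 1/((n:ℝ)+1) ≤ 1/((N:ℝ)+1) := by
      apply one_div_le_one_div_of_le (by positivity)
      have : (N:ℝ) ≤ (n:ℝ) := Nat.cast_le.mpr hnN
      linarith
    calc dist (α x) (A n x) ≤ |(p n).eval x - α x| := key
      _ < 1/((n:ℝ)+1) := hclose
      _ ≤ 1/((N:ℝ)+1) := hfin
      _ < ε := hN
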